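/- Let Q ⊆ R^d be a bounded polytope that can be represented as the intersection of n halfspaces. Then Q can be covered by at most n^d simplices of the form conv({x₀, ..., x_d}) where each x_i is a vertex of Q. -/

import Mathlib

open Set Module

section Helpers

variable {d : ℕ}

private lemma mem_extreme_of_subsingleton {Q : Set (EuclideanSpace ℝ (Fin d))}
    (h : Q.Subsingleton) {q : EuclideanSpace ℝ (Fin d)} (hq : q ∈ Q) :
    q ∈ Q.extremePoints ℝ :=
  mem_extremePoints.2 ⟨hq, fun x₁ hx₁ x₂ hx₂ _ => ⟨h hx₁ hq, h hx₂ hq⟩⟩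

private lemma cover_subsingleton {k m : ℕ} (hm : 1 ≤ m) (Q : Set (EuclideanSpace ℝ (Fin d)))
    (h : Q.Subsingleton) :
    ∃ T : Finset (Fin (k + 1) → EuclideanSpace ℝ (Fin d)),
      T.card ≤ m ∧ (∀ f ∈ T, ∀ i, f i ∈ Set.extremePoints ℝ Q) ∧
      Q ⊆ ⋃ f ∈ T, convexHull ℝ (Set.range f) := by
  rcases Q.eq_empty_or_nonempty with rfl | ⟨q, hq⟩
  · exact ⟨∅, by simp, by simp, by simp⟩
  · refine ⟨{fun _ => q}, by simp [hm], ?_, ?_⟩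
    · intro f hf i
      simp only [Finset.mem_singleton] at hf
      subst hf
      exact mem_extreme_of_subsingleton h hq
    · intro x hx
      have hxq : x = q := h hx hq
      subst hxq
      refine Set.mem_biUnion (Finset.mem_singleton_self _) ?_
      exact subset_convexHull ℝ _ ⟨0, rfl⟩

private lemma subsingleton_of_dim_zero (Q : Set (EuclideanSpace ℝ (Fin d)))
    (h : Module.finrank ℝ (affineSpan ℝ Q).direction = 0) : Q.Subsingleton := by
  intro x hx y hy
  have hdir : (affineSpan ℝ Q).direction = ⊥ := Submodule.finrank_eq_zero.mp h
  have hm := AffineSubspace.vsub_mem_direction (subset_affineSpan ℝ Q hx)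
    (subset_affineSpan ℝ Q hy)
  rw [hdir, Submodule.mem_bot, vsub_eq_sub, sub_eq_zero] at hm
  exact hm

private noncomputable def hyp (a : EuclideanSpace ℝ (Fin d)) (c : ℝ) :
    AffineSubspace ℝ (EuclideanSpace ℝ (Fin d)) where
  carrier := {x | (inner ℝ a x : ℝ) = c}
  smul_vsub_vadd_mem' := by
    intro t p₁ p₂ p₃ h₁ h₂ h₃
    simp only [Set.mem_setOf_eq] at *
    rw [vsub_eq_sub, vadd_eq_add, inner_add_right, real_inner_smul_right, inner_sub_right,
      h₁, h₂, h₃]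
    ring

@[simp] private lemma mem_hyp {a : EuclideanSpace ℝ (Fin d)} {c : ℝ}
    {x : EuclideanSpace ℝ (Fin d)} : x ∈ hyp a c ↔ (inner ℝ a x : ℝ) = c := Iff.rfl

end Helpers

section Ray

variable {d : ℕ}

private lemma ray_hits {n : ℕ} (A : Fin n → EuclideanSpace ℝ (Fin d)) (b : Fin n → ℝ)
    (W : AffineSubspace ℝ (EuclideanSpace ℝ (Fin d))) (Q : Set (EuclideanSpace ℝ (Fin d)))
    (hrep : Q = ↑W ∩ {x | ∀ i, (inner ℝ (A i) x : ℝ) ≤ b i})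
    (hcomp : IsCompact Q) {v x : EuclideanSpace ℝ (Fin d)} (hv : v ∈ Q) (hx : x ∈ Q)
    (hxv : x ≠ v) :
    ∃ i : Fin n, ∃ y ∈ Q, (inner ℝ (A i) y : ℝ) = b i ∧ (inner ℝ (A i) v : ℝ) < b i ∧
      x ∈ segment ℝ v y := by
  set u : EuclideanSpace ℝ (Fin d) := x - v with hu
  have hu0 : u ≠ 0 := sub_ne_zero.mpr hxv
  have hunorm : (0:ℝ) < ‖u‖ := norm_pos_iff.mpr hu0
  set S : Set ℝ := {t : ℝ | v + t • u ∈ Q} with hS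
  have h1S : (1:ℝ) ∈ S := by
    simp only [hS, Set.mem_setOf_eq, one_smul, hu]
    simpa using hx
  have hScl : IsClosed S := by
    have hcont : Continuous fun t : ℝ => v + t • u :=
      continuous_const.add (continuous_id.smul continuous_const)
    exact hcomp.isClosed.preimage hcont
  obtain ⟨R, hR⟩ := hcomp.isBounded.exists_norm_le
  have hbdd : BddAbove S := by
    refine ⟨(R + ‖v‖) / ‖u‖, fun t ht => ?_⟩
    have h1 : ‖v + t • u‖ ≤ R := hR _ ht
    have h2 : ‖t • u‖ ≤ R + ‖v‖ := by
      have h4 : t • u = (v + t • u) - v := by abel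
      rw [h4]
      have := norm_sub_le (v + t • u) v
      linarith
    rw [norm_smul, Real.norm_eq_abs] at h2
    have h3 : t ≤ (R + ‖v‖) / ‖u‖ := by
      rw [le_div_iff₀ hunorm]
      calc t * ‖u‖ ≤ |t| * ‖u‖ := by
            have : t ≤ |t| := le_abs_self t
            nlinarith
        _ ≤ R + ‖v‖ := h2
    exact h3
  set t₀ : ℝ := sSup S with ht₀
  have ht₀S : t₀ ∈ S := hScl.csSup_mem ⟨1, h1S⟩ hbdd
  have ht₀1 : 1 ≤ t₀ := le_csSup hbdd h1S
  set y : EuclideanSpace ℝ (Fin d) := v + t₀ • u with hy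
  have hyQ : y ∈ Q := ht₀S
  have hyhalf : ∀ i, (inner ℝ (A i) y : ℝ) ≤ b i := by
    intro i
    rw [hrep] at hyQ
    exact hyQ.2 i
  -- the ray stays in W
  have hrayW : ∀ t : ℝ, v + t • u ∈ W := by
    intro t
    have hvW : v ∈ W := by rw [hrep] at hv; exact hv.1
    have hxW : x ∈ W := by rw [hrep] at hx; exact hx.1
    have := W.smul_vsub_vadd_mem t hxW hvW hvW
    rw [vsub_eq_sub, vadd_eq_add] at this
    rwa [add_comm, hu]
  -- key claim: some constraint is tight at y with positive slope
  have hclaim : ∃ i : Fin n, (inner ℝ (A i) y : ℝ) = b i ∧ (0:ℝ) < inner ℝ (A i) u := by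
    by_contra hcon
    push_neg at hcon
    -- every constraint with positive slope has slack at y
    set J : Finset (Fin n) := Finset.univ.filter (fun i => (0:ℝ) < inner ℝ (A i) u) with hJ
    have hslack : ∀ i ∈ J, (inner ℝ (A i) y : ℝ) < b i := by
      intro i hi
      rw [hJ, Finset.mem_filter] at hi
      rcases lt_or_eq_of_le (hyhalf i) with h | h
      · exact h
      · exact absurd hi.2 (not_lt.mpr (hcon i h))
    set ε : ℝ := if hJne : J.Nonempty then
        J.inf' hJne (fun i => (b i - inner ℝ (A i) y) / inner ℝ (A i) u) else 1 with hε
    have hεpos : 0 < ε := by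
      rw [hε]
      split_ifs with hJne
      · rw [Finset.lt_inf'_iff]
        intro i hi
        have h1 := hslack i hi
        rw [hJ, Finset.mem_filter] at hi
        exact div_pos (by linarith) hi.2
      · norm_num
    have hmem : t₀ + ε ∈ S := by
      rw [hS, Set.mem_setOf_eq, hrep]
      refine ⟨hrayW _, ?_⟩
      intro i
      have hcalc : (inner ℝ (A i) (v + (t₀ + ε) • u) : ℝ)
          = inner ℝ (A i) y + ε * inner ℝ (A i) u := by
        rw [hy]
        rw [inner_add_right, inner_add_right, real_inner_smul_right, real_inner_smul_right]
        ring
      rw [hcalc]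
      by_cases hpos : (0:ℝ) < inner ℝ (A i) u
      · have hiJ : i ∈ J := by rw [hJ, Finset.mem_filter]; exact ⟨Finset.mem_univ _, hpos⟩
        have hJne : J.Nonempty := ⟨i, hiJ⟩
        have hεle : ε ≤ (b i - inner ℝ (A i) y) / inner ℝ (A i) u := by
          rw [hε]
          simp only [dif_pos hJne]
          exact Finset.inf'_le _ hiJ
        have := (le_div_iff₀ hpos).mp hεle
        linarith
      · push_neg at hpos
        have h1 : ε * inner ℝ (A i) u ≤ 0 := mul_nonpos_of_nonneg_of_nonpos hεpos.le hpos
        have := hyhalf i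
        linarith
    have : t₀ + ε ≤ t₀ := le_csSup hbdd hmem
    linarith
  obtain ⟨i, hib, hipos⟩ := hclaim
  have ht₀pos : (0:ℝ) < t₀ := lt_of_lt_of_le one_pos ht₀1
  have hvlt : (inner ℝ (A i) v : ℝ) < b i := by
    have : (inner ℝ (A i) y : ℝ) = inner ℝ (A i) v + t₀ * inner ℝ (A i) u := by
      rw [hy, inner_add_right, real_inner_smul_right]
    nlinarith
  refine ⟨i, y, hyQ, hib, hvlt, ?_⟩
  -- x = v + u lies on the segment from v to y = v + t₀ • u
  have hinv : t₀⁻¹ ≤ 1 := by rw [← one_div]; exact (div_le_one ht₀pos).mpr ht₀1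
  refine ⟨1 - t₀⁻¹, t₀⁻¹, by linarith, by positivity, by ring, ?_⟩
  have hxeq : x = v + u := by rw [hu]; abel
  rw [hy, hxeq]
  rw [smul_add, smul_smul, inv_mul_cancel₀ (ne_of_gt ht₀pos)]
  module

end Ray

set_option maxHeartbeats 1000000 in
private lemma key (d n : ℕ) (hn : 0 < n) (A : Fin n → EuclideanSpace ℝ (Fin d)) (b : Fin n → ℝ) :
    ∀ (k : ℕ) (W : AffineSubspace ℝ (EuclideanSpace ℝ (Fin d)))
      (Q : Set (EuclideanSpace ℝ (Fin d))),
      Q = ↑W ∩ {x | ∀ i, (inner ℝ (A i) x : ℝ) ≤ b i} → IsCompact Q →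
      Module.finrank ℝ (affineSpan ℝ Q).direction ≤ k →
      ∃ T : Finset (Fin (k + 1) → EuclideanSpace ℝ (Fin d)),
        T.card ≤ n ^ k ∧ (∀ f ∈ T, ∀ i, f i ∈ Set.extremePoints ℝ Q) ∧
        Q ⊆ ⋃ f ∈ T, convexHull ℝ (Set.range f) := by
  classical
  intro k
  induction k with
  | zero =>
    intro W Q hrep hcomp hdim
    exact cover_subsingleton (by simp) Q (subsingleton_of_dim_zero Q (Nat.le_zero.mp hdim))
  | succ k IH =>
    intro W Q hrep hcomp hdim
    by_cases hss : Q.Subsingleton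
    · exact cover_subsingleton (Nat.one_le_pow _ _ hn) Q hss
    rw [Set.not_subsingleton_iff] at hss
    have hne : Q.Nonempty := hss.nonempty
    obtain ⟨v, hvext⟩ := hcomp.extremePoints_nonempty hne
    have hvQ : v ∈ Q := hvext.1
    set F : Fin n → Set (EuclideanSpace ℝ (Fin d)) :=
      fun i => Q ∩ {x | (inner ℝ (A i) x : ℝ) = b i} with hF
    have hFsub : ∀ i, F i ⊆ Q := fun i => Set.inter_subset_left
    have hFexp : ∀ i, IsExposed ℝ Q (F i) := by
      intro i hFne
      obtain ⟨z, hzQ, hzb⟩ := hFne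
      refine ⟨innerSL ℝ (A i), ?_⟩
      ext w
      simp only [hF, Set.mem_inter_iff, Set.mem_setOf_eq, Set.mem_sep_iff, innerSL_apply_apply]
      constructor
      · rintro ⟨hwQ, hwb⟩
        refine ⟨hwQ, fun p hp => ?_⟩
        have hple : (inner ℝ (A i) p : ℝ) ≤ b i := by rw [hrep] at hp; exact hp.2 i
        rw [hwb]; exact hple
      · rintro ⟨hwQ, hmax⟩
        refine ⟨hwQ, le_antisymm ?_ ?_⟩
        · rw [hrep] at hwQ; exact hwQ.2 i
        · have := hmax z hzQ
          rw [hzb] at this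
          exact this
    have hTs : ∀ i : Fin n, ∃ Ti : Finset (Fin (k + 1) → EuclideanSpace ℝ (Fin d)),
        Ti.card ≤ n ^ k ∧ (∀ f ∈ Ti, ∀ j, f j ∈ Set.extremePoints ℝ (F i)) ∧
        ((inner ℝ (A i) v : ℝ) < b i → F i ⊆ ⋃ f ∈ Ti, convexHull ℝ (Set.range f)) := by
      intro i
      by_cases hvb : (inner ℝ (A i) v : ℝ) < b i
      swap
      · exact ⟨∅, by simp, by simp, fun h => absurd h hvb⟩
      rcases (F i).eq_empty_or_nonempty with hFe | hFne
      · exact ⟨∅, by simp, by simp, fun _ => by rw [hFe]; exact Set.empty_subset _⟩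
      have hHcl : IsClosed {x : EuclideanSpace ℝ (Fin d) | (inner ℝ (A i) x : ℝ) = b i} :=
        isClosed_eq (Continuous.inner continuous_const continuous_id) continuous_const
      have hFcomp : IsCompact (F i) := hcomp.inter_right hHcl
      have hFrep : F i = ↑(W ⊓ hyp (A i) (b i)) ∩ {x | ∀ j, (inner ℝ (A j) x : ℝ) ≤ b j} := by
        rw [hF, hrep]
        ext w
        simp only [Set.mem_inter_iff, Set.mem_setOf_eq, SetLike.mem_coe,
          AffineSubspace.mem_inf_iff, mem_hyp]
        tauto
      have hdimF : Module.finrank ℝ (affineSpan ℝ (F i)).direction ≤ k := by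
        have hle : affineSpan ℝ (F i) ≤ affineSpan ℝ Q := affineSpan_mono ℝ (hFsub i)
        have hdirle : (affineSpan ℝ (F i)).direction ≤ (affineSpan ℝ Q).direction :=
          AffineSubspace.direction_le hle
        have hnedir : (affineSpan ℝ (F i)).direction ≠ (affineSpan ℝ Q).direction := by
          intro heq
          obtain ⟨z, hz⟩ := hFne
          have heq2 : affineSpan ℝ (F i) = affineSpan ℝ Q :=
            (AffineSubspace.eq_iff_direction_eq_of_mem (subset_affineSpan ℝ _ hz)
              (subset_affineSpan ℝ _ (hFsub i hz))).mpr heq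
          have hvmem : v ∈ affineSpan ℝ (F i) := heq2 ▸ subset_affineSpan ℝ _ hvQ
          have hsubH : affineSpan ℝ (F i) ≤ hyp (A i) (b i) := by
            rw [affineSpan_le]
            intro w hw
            exact hw.2
          exact absurd (hsubH hvmem) (by simpa using ne_of_lt hvb)
        have hlt := Submodule.finrank_lt_finrank_of_lt (lt_of_le_of_ne hdirle hnedir)
        omega
      obtain ⟨Ti, h1, h2, h3⟩ := IH (W ⊓ hyp (A i) (b i)) (F i) hFrep hFcomp hdimF
      exact ⟨Ti, h1, h2, fun _ => h3⟩
    choose Ts hcard hvert hcov using hTs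
    haveI hde : DecidableEq (Fin (k + 1 + 1) → EuclideanSpace ℝ (Fin d)) := Classical.decEq _
    set cns : (Fin (k + 1) → EuclideanSpace ℝ (Fin d)) → (Fin (k + 1 + 1) → EuclideanSpace ℝ (Fin d)) :=
      fun g => (Fin.cons v g : Fin (k + 1 + 1) → EuclideanSpace ℝ (Fin d)) with hcns
    refine ⟨Finset.univ.biUnion (fun i => (Ts i).image cns), ?_, ?_, ?_⟩
    · calc (Finset.univ.biUnion (fun i => (Ts i).image cns)).card
          ≤ ∑ i : Fin n, ((Ts i).image cns).card := Finset.card_biUnion_le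
        _ ≤ ∑ _i : Fin n, n ^ k := Finset.sum_le_sum (fun i _ =>
            le_trans Finset.card_image_le (hcard i))
        _ = n * n ^ k := by simp [Finset.sum_const, Finset.card_univ, mul_comm]
        _ = n ^ (k + 1) := by ring
    · intro f hf j
      simp only [Finset.mem_biUnion, Finset.mem_image] at hf
      obtain ⟨i, _, g, hg, rfl⟩ := hf
      refine Fin.cases ?_ ?_ j
      · simpa [hcns] using hvext
      · intro j'
        simp only [hcns, Fin.cons_succ]
        exact ((hFexp i).isExtreme).extremePoints_subset_extremePoints (hvert i _ hg j')
    · have hmain : ∀ x ∈ Q, x ≠ v → ∃ i, ∃ g ∈ Ts i,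
          x ∈ convexHull ℝ (Set.range (cns g)) := by
        intro x hxQ hxv
        obtain ⟨i, y, hyQ, hyb, hvb, hseg⟩ := ray_hits A b W Q hrep hcomp hvQ hxQ hxv
        have hyF : y ∈ F i := ⟨hyQ, hyb⟩
        have := hcov i hvb hyF
        rw [Set.mem_iUnion₂] at this
        obtain ⟨g, hgTi, hyg⟩ := this
        refine ⟨i, g, hgTi, ?_⟩
        rw [hcns]
        rw [Fin.range_cons]
        have hvmem : v ∈ convexHull ℝ (insert v (Set.range g)) :=
          subset_convexHull ℝ _ (Set.mem_insert _ _)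
        have hymem : y ∈ convexHull ℝ (insert v (Set.range g)) :=
          convexHull_mono (Set.subset_insert _ _) hyg
        exact (convex_convexHull ℝ _).segment_subset hvmem hymem hseg
      intro x hxQ
      by_cases hxv : x = v
      · obtain ⟨x₀, hx₀Q, x₁, hx₁Q, hne01⟩ := hss
        have hz : ∃ z ∈ Q, z ≠ v := by
          by_cases h0 : x₀ = v
          · exact ⟨x₁, hx₁Q, fun h => hne01 (h0.trans h.symm)⟩
          · exact ⟨x₀, hx₀Q, h0⟩
        obtain ⟨z, hzQ, hzv⟩ := hz
        obtain ⟨i, g, hgTi, _⟩ := hmain z hzQ hzv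
        subst hxv
        refine Set.mem_iUnion₂.mpr ⟨cns g, ?_, subset_convexHull ℝ _ ⟨0, by simp [hcns]⟩⟩
        exact Finset.mem_biUnion.mpr ⟨i, Finset.mem_univ _, Finset.mem_image_of_mem _ hgTi⟩
      · obtain ⟨i, g, hgTi, hxg⟩ := hmain x hxQ hxv
        refine Set.mem_iUnion₂.mpr ⟨cns g, ?_, hxg⟩
        exact Finset.mem_biUnion.mpr ⟨i, Finset.mem_univ _, Finset.mem_image_of_mem _ hgTi⟩

/-- Dual variant of Carathéodory's theorem: a bounded polytope given as an intersection of
`n` halfspaces can be covered by at most `n ^ d` simplices whose vertices are vertices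
(extreme points) of the polytope. -/
theorem dual_caratheodory (d n : ℕ) (A : Fin n → EuclideanSpace ℝ (Fin d)) (b : Fin n → ℝ)
    (Q : Set (EuclideanSpace ℝ (Fin d)))
    (hQ : Q = {x | ∀ i, (inner ℝ (A i) x : ℝ) ≤ b i})
    (hbdd : Bornology.IsBounded Q) :
    ∃ T : Finset (Fin (d + 1) → EuclideanSpace ℝ (Fin d)),
      T.card ≤ n ^ d ∧
      (∀ f ∈ T, ∀ i, f i ∈ Set.extremePoints ℝ Q) ∧
      Q ⊆ ⋃ f ∈ T, convexHull ℝ (Set.range f) := by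
  by_cases hd : d = 0
  · subst hd
    have hss : Q.Subsingleton := fun x _ y _ => Subsingleton.elim x y
    exact cover_subsingleton (by simp) Q hss
  by_cases hn : n = 0
  · exfalso
    subst hn
    have hQu : Q = Set.univ := by
      rw [hQ]
      ext x
      simp [Fin.elim0, IsEmpty.forall_iff]
    rw [hQu] at hbdd
    haveI : Nonempty (Fin d) := ⟨⟨0, Nat.pos_of_ne_zero hd⟩⟩
    haveI : Nontrivial (EuclideanSpace ℝ (Fin d)) := by
      refine ⟨0, EuclideanSpace.single (Classical.arbitrary (Fin d)) 1, fun h => ?_⟩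
      have := congrArg (fun w : EuclideanSpace ℝ (Fin d) => w (Classical.arbitrary (Fin d))) h
      simp [EuclideanSpace.single_apply] at this
    exact NormedSpace.unbounded_univ ℝ (EuclideanSpace ℝ (Fin d)) hbdd
  have hncl : IsClosed Q := by
    have hQi : Q = ⋂ i, {x : EuclideanSpace ℝ (Fin d) | (inner ℝ (A i) x : ℝ) ≤ b i} := by
      rw [hQ]; ext x; simp
    rw [hQi]
    exact isClosed_iInter fun i =>
      isClosed_le (Continuous.inner continuous_const continuous_id) continuous_const
  have hcomp : IsCompact Q := Metric.isCompact_of_isClosed_isBounded hncl hbdd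
  have hrep : Q = ↑(⊤ : AffineSubspace ℝ (EuclideanSpace ℝ (Fin d)))
      ∩ {x | ∀ i, (inner ℝ (A i) x : ℝ) ≤ b i} := by
    rw [hQ, AffineSubspace.top_coe, Set.univ_inter]
  have hdim : Module.finrank ℝ (affineSpan ℝ Q).direction ≤ d :=
    le_trans (Submodule.finrank_le _) (le_of_eq finrank_euclideanSpace_fin)
  exact key d n (Nat.pos_of_ne_zero hn) A b d ⊤ Q hrep hcomp hdim
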